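/- Consider the 1-dimensional physical Brownian momentum P solving dP_t = −(M/m)P_t dt + dW_t with P₀ = p, where M > 0 and m > 0. Then for every p ∈ ℝ, t > 0, and every level n ≥ 0, the n-th level expected signature Φₙ^{(m)}(t,p) converges as m → 0⁺ to (−p)ⁿ/n!. -/

import Mathlib

open MeasureTheory Filter

/-- The explicit formula for the level-`n` expected signature of the 1-D physical
Brownian momentum `dP = −(M/m) P dt + dW`, `P₀ = p` (covering both the odd and the even
level formulas of Lemma 3.1 with `θ = M/m`, `σ = 1`). -/
noncomputable def Phi1D (M m t p : ℝ) (n : ℕ) : ℝ :=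
  (1 / (n.factorial : ℝ)) *
    ∑ i ∈ Finset.range (n / 2 + 1),
      (n.choose (2 * i) : ℝ) * (-p) ^ (n - 2 * i) *
        (1 - Real.exp (-(M / m) * t)) ^ (n - 2 * i) *
        (m / (2 * M)) ^ i * (1 - Real.exp (-2 * (M / m) * t)) ^ i *
        (Nat.doubleFactorial (2 * i - 1) : ℝ)

lemma aux_exp_tendsto (c t : ℝ) (hc : 0 < c) (ht : 0 < t) :
    Tendsto (fun m : ℝ => Real.exp (-(c / m) * t)) (nhdsWithin 0 (Set.Ioi 0)) (nhds 0) := by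
  have h1 : Tendsto (fun m : ℝ => c / m) (nhdsWithin 0 (Set.Ioi 0)) atTop := by
    have := tendsto_inv_nhdsGT_zero.const_mul_atTop hc
    simpa [div_eq_mul_inv] using this
  have h2 : Tendsto (fun m : ℝ => -(c / m) * t) (nhdsWithin 0 (Set.Ioi 0)) atBot := by
    have := tendsto_neg_atTop_atBot.comp (h1.atTop_mul_const ht)
    simpa [Function.comp_def, neg_mul] using this
  exact Real.tendsto_exp_atBot.comp h2

/-- in the small mass limit `m → 0⁺`, each level `n` of the expected
signature of the 1-D physical Brownian momentum converges to `(−p)ⁿ / n!`. -/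
theorem one_dim_small_mass_limit
    (M : ℝ) (hM : 0 < M) (t : ℝ) (ht : 0 < t) (p : ℝ) (n : ℕ) :
    Tendsto (fun m : ℝ => Phi1D M m t p n) (nhdsWithin 0 (Set.Ioi 0))
      (nhds ((-p) ^ n / (n.factorial : ℝ))) := by
  have he1 : Tendsto (fun m : ℝ => 1 - Real.exp (-(M / m) * t)) (nhdsWithin 0 (Set.Ioi 0))
      (nhds 1) := by
    simpa using (tendsto_const_nhds (x := (1:ℝ))).sub (aux_exp_tendsto M t hM ht)
  have he2 : Tendsto (fun m : ℝ => 1 - Real.exp (-2 * (M / m) * t)) (nhdsWithin 0 (Set.Ioi 0))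
      (nhds 1) := by
    have h := aux_exp_tendsto (2 * M) t (by linarith) ht
    have heq : (fun m : ℝ => Real.exp (-(2 * M / m) * t))
        = fun m : ℝ => Real.exp (-2 * (M / m) * t) := by
      funext m; ring_nf
    rw [heq] at h
    simpa using (tendsto_const_nhds (x := (1:ℝ))).sub h
  have h0 : Tendsto (fun m : ℝ => m / (2 * M)) (nhdsWithin 0 (Set.Ioi 0)) (nhds 0) := by
    have h : Tendsto (fun m : ℝ => m / (2 * M)) (nhds 0) (nhds (0 / (2 * M))) :=
      (continuous_id.div_const _).tendsto 0
    rw [zero_div] at h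
    exact h.mono_left nhdsWithin_le_nhds
  have hsum : Tendsto (fun m : ℝ => ∑ i ∈ Finset.range (n / 2 + 1),
        (n.choose (2 * i) : ℝ) * (-p) ^ (n - 2 * i) *
          (1 - Real.exp (-(M / m) * t)) ^ (n - 2 * i) *
          (m / (2 * M)) ^ i * (1 - Real.exp (-2 * (M / m) * t)) ^ i *
          (Nat.doubleFactorial (2 * i - 1) : ℝ))
      (nhdsWithin 0 (Set.Ioi 0))
      (nhds (∑ i ∈ Finset.range (n / 2 + 1),
        (n.choose (2 * i) : ℝ) * (-p) ^ (n - 2 * i) *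
          (1 : ℝ) ^ (n - 2 * i) * (0 : ℝ) ^ i * (1 : ℝ) ^ i *
          (Nat.doubleFactorial (2 * i - 1) : ℝ))) := by
    refine tendsto_finset_sum _ fun i _ => ?_
    exact ((((tendsto_const_nhds.mul (he1.pow _)).mul (h0.pow i)).mul (he2.pow i)).mul
      tendsto_const_nhds)
  have hval : (∑ i ∈ Finset.range (n / 2 + 1),
      (n.choose (2 * i) : ℝ) * (-p) ^ (n - 2 * i) *
        (1 : ℝ) ^ (n - 2 * i) * (0 : ℝ) ^ i * (1 : ℝ) ^ i *
        (Nat.doubleFactorial (2 * i - 1) : ℝ)) = (-p) ^ n := by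
    rw [Finset.sum_eq_single 0]
    · simp [Nat.doubleFactorial]
    · intro i _ hi
      simp [zero_pow hi]
    · intro h
      exact absurd (Finset.mem_range.2 (Nat.succ_pos _)) h
  rw [hval] at hsum
  have := tendsto_const_nhds (x := (1 / (n.factorial : ℝ))) |>.mul hsum
  simp only [Phi1D]
  convert this using 2
  rw [one_div, inv_mul_eq_div]
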